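/- For any two unit vectors u, v in ℝ³, the intrinsic (induced length) distance between u and v in the unit sphere S² equals the angle between u and v. -/

import Mathlib

open scoped ENNReal

open Real InnerProductGeometry
open scoped RealInnerProductSpace

section Aux
variable {V : Type*} [NormedAddCommGroup V] [InnerProductSpace ℝ V]


lemma cos_angle_unit {x y : V} (hx : ‖x‖ = 1) (hy : ‖y‖ = 1) :
    Real.cos (angle x y) = ⟪x, y⟫ := by
  rw [cos_angle, hx, hy]; ring

lemma cos_eq_one_sub_sin_sq_half (θ : ℝ) :
    Real.cos θ = 1 - 2 * Real.sin (θ / 2) ^ 2 := by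
  have h := Real.cos_two_mul (θ / 2)
  have h2 := Real.sin_sq_add_cos_sq (θ / 2)
  have : 2 * (θ / 2) = θ := by ring
  rw [this] at h
  linarith

lemma chord_eq {x y : V} (hx : ‖x‖ = 1) (hy : ‖y‖ = 1) :
    ‖x - y‖ = 2 * Real.sin (angle x y / 2) := by
  have h1 : ‖x - y‖ ^ 2 = 2 - 2 * Real.cos (angle x y) := by
    rw [cos_angle_unit hx hy, norm_sub_sq_real, hx, hy]; ring
  have h2 := cos_eq_one_sub_sin_sq_half (angle x y)
  have h3 : 0 ≤ Real.sin (angle x y / 2) :=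
    Real.sin_nonneg_of_nonneg_of_le_pi (by linarith [angle_nonneg x y])
      (by linarith [angle_le_pi x y, Real.pi_pos])
  nlinarith [norm_nonneg (x - y)]

/-- angle controlled by chord when chord small. -/
lemma angle_le_chord_div {x y : V} (hx : ‖x‖ = 1) (hy : ‖y‖ = 1) {ε : ℝ}
    (hc : ‖x - y‖ ≤ ε) : angle x y * Real.sqrt (1 - (ε / 2) ^ 2) ≤ ‖x - y‖ := by
  rcases le_or_gt 2 ε with h2 | h2
  · have : Real.sqrt (1 - (ε / 2) ^ 2) = 0 :=
      Real.sqrt_eq_zero_of_nonpos (by nlinarith)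
    rw [this, mul_zero]; positivity
  · set θ := angle x y with hθ
    have hθ0 := angle_nonneg x y
    have hθπ := angle_le_pi x y
    have hchord := chord_eq hx hy
    have hsin : Real.sin (θ / 2) ≤ ε / 2 := by rw [hchord] at hc; linarith
    have hhalf : θ / 2 < π / 2 := by
      by_contra hcon
      push_neg at hcon
      have : θ / 2 = π / 2 := le_antisymm (by linarith) hcon
      rw [this, Real.sin_pi_div_two] at hsin
      linarith
    have hcos : Real.cos (θ / 2) = Real.sqrt (1 - Real.sin (θ / 2) ^ 2) :=
      Real.cos_eq_sqrt_one_sub_sin_sq (by linarith [Real.pi_pos]) (le_of_lt hhalf)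
    have hcosge : Real.sqrt (1 - (ε / 2) ^ 2) ≤ Real.cos (θ / 2) := by
      rw [hcos]
      apply Real.sqrt_le_sqrt
      have hsin0 : 0 ≤ Real.sin (θ / 2) :=
        Real.sin_nonneg_of_nonneg_of_le_pi (by linarith) (by linarith [Real.pi_pos])
      nlinarith
    have htan : θ / 2 ≤ Real.tan (θ / 2) := Real.le_tan (by linarith) hhalf
    have hcospos : 0 < Real.cos (θ / 2) := Real.cos_pos_of_mem_Ioo ⟨by linarith [Real.pi_pos], hhalf⟩
    rw [Real.tan_eq_sin_div_cos, le_div_iff₀ hcospos] at htan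
    rw [hchord]
    calc θ * Real.sqrt (1 - (ε / 2) ^ 2) ≤ θ * Real.cos (θ / 2) :=
          mul_le_mul_of_nonneg_left hcosge hθ0
      _ ≤ 2 * Real.sin (θ / 2) := by linarith
lemma sin_angle_unit {x y : V} (hx : ‖x‖ = 1) (hy : ‖y‖ = 1) :
    Real.sin (angle x y) = ‖x - ⟪x, y⟫ • y‖ := by
  have h := Real.sin_eq_sqrt_one_sub_cos_sq (angle_nonneg x y) (angle_le_pi x y)
  rw [cos_angle_unit hx hy] at h
  rw [h]
  have hnorm : ‖x - ⟪x, y⟫ • y‖ ^ 2 = 1 - ⟪x, y⟫ ^ 2 := by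
    rw [norm_sub_sq_real, real_inner_smul_right, norm_smul, hx, hy]
    simp [Real.norm_eq_abs]
    ring
  rw [← hnorm, Real.sqrt_sq (norm_nonneg _)]

/-- Triangle inequality for the angle, unit vectors. -/
lemma angle_triangle_unit {x y z : V} (hx : ‖x‖ = 1) (hy : ‖y‖ = 1) (hz : ‖z‖ = 1) :
    angle x z ≤ angle x y + angle y z := by
  rcases le_or_gt π (angle x y + angle y z) with h | h
  · linarith [angle_le_pi x z]
  · have ha0 := angle_nonneg x y
    have hb0 := angle_nonneg y z
    set p := x - ⟪x, y⟫ • y with hp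
    set q := z - ⟪z, y⟫ • y with hq
    have hyy : ⟪y, y⟫ = (1:ℝ) := by
      rw [real_inner_self_eq_norm_sq, hy]; norm_num
    have hpy : ⟪p, y⟫ = 0 := by
      rw [hp, inner_sub_left, real_inner_smul_left, hyy]; ring
    have hqy : ⟪q, y⟫ = 0 := by
      rw [hq, inner_sub_left, real_inner_smul_left, hyy]; ring
    have hnp : ‖p‖ = Real.sin (angle x y) := (sin_angle_unit hx hy).symm
    have hnq : ‖q‖ = Real.sin (angle y z) := by
      rw [angle_comm y z, sin_angle_unit hz hy]
    have hxz : ⟪x, z⟫ = ⟪p, q⟫ + ⟪x, y⟫ * ⟪z, y⟫ := by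
      have hx' : x = p + ⟪x, y⟫ • y := by rw [hp]; abel
      have hz' : z = q + ⟪z, y⟫ • y := by rw [hq]; abel
      conv_lhs => rw [hx', hz']
      rw [inner_add_left, inner_add_right, inner_add_right, real_inner_smul_left,
        real_inner_smul_right, real_inner_smul_right, real_inner_smul_left, hyy,
        real_inner_comm q y, hqy, hpy]
      ring
    have hCS : -(‖p‖ * ‖q‖) ≤ ⟪p, q⟫ := neg_le_of_abs_le (abs_real_inner_le_norm p q)
    have hkey : Real.cos (angle x y + angle y z) ≤ ⟪x, z⟫ := by
      have hzy : ⟪z, y⟫ = Real.cos (angle y z) := by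
        rw [real_inner_comm, ← cos_angle_unit hy hz]
      have hxy : ⟪x, y⟫ = Real.cos (angle x y) := (cos_angle_unit hx hy).symm
      rw [Real.cos_add, hxz, hzy, hxy]
      rw [hnp, hnq] at hCS
      linarith
    calc angle x z = Real.arccos ⟪x, z⟫ := by rw [angle, hx, hz]; norm_num
      _ ≤ Real.arccos (Real.cos (angle x y + angle y z)) := by
          rw [Real.arccos, Real.arccos]
          have := Real.monotone_arcsin hkey
          linarith
      _ = angle x y + angle y z := Real.arccos_cos (by linarith) (le_of_lt h)
lemma chain_angle {w : ℕ → V} (hw : ∀ i, ‖w i‖ = 1)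
    (n : ℕ) : angle (w 0) (w n) ≤ ∑ i ∈ Finset.range n, angle (w i) (w (i + 1)) := by
  induction n with
  | zero =>
    simp
    rw [angle_self (by intro h; have := hw 0; rw [h] at this; simp at this)]
  | succ n ih =>
    rw [Finset.sum_range_succ]
    calc angle (w 0) (w (n + 1)) ≤ angle (w 0) (w n) + angle (w n) (w (n + 1)) :=
          angle_triangle_unit (hw 0) (hw n) (hw (n + 1))
      _ ≤ _ := by linarith
lemma min_step (a c : ℝ) (hc : 0 ≤ c) : min (a + c) 1 - min a 1 ≤ c := by
  rcases le_total a 1 with h | h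
  · rw [min_eq_left h]
    linarith [min_le_left (a + c) 1]
  · rw [min_eq_right h]
    linarith [min_le_right (a + c) 1]

lemma lower_bound {u v : V} (hu : ‖u‖ = 1) (hv : ‖v‖ = 1)
    (γ : ℝ → V) (hcont : ContinuousOn γ (Set.Icc 0 1))
    (h0 : γ 0 = u) (h1 : γ 1 = v) (hsph : ∀ t ∈ Set.Icc (0:ℝ) 1, ‖γ t‖ = 1) :
    ENNReal.ofReal (angle u v) ≤ eVariationOn γ (Set.Icc 0 1) := by
  set θ := angle u v with hθ
  rcases eq_or_ne (eVariationOn γ (Set.Icc 0 1)) ⊤ with hV | hV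
  · rw [hV]; exact le_top
  set Vr := (eVariationOn γ (Set.Icc 0 1)).toReal with hVr
  have key : ∀ ε : ℝ, 0 < ε → θ * Real.sqrt (1 - (ε / 2) ^ 2) ≤ Vr := by
    intro ε hε
    have hUC : UniformContinuousOn γ (Set.Icc 0 1) :=
      isCompact_Icc.uniformContinuousOn_of_continuous hcont
    rw [Metric.uniformContinuousOn_iff] at hUC
    obtain ⟨δ, hδ0, hδ⟩ := hUC ε hε
    obtain ⟨n, hn⟩ := exists_nat_one_div_lt hδ0
    set N : ℕ := n + 1 with hN
    have hNpos : (0:ℝ) < N := by positivity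
    have hNδ : 1 / (N:ℝ) < δ := by rw [hN]; push_cast; exact hn
    set P : ℕ → ℝ := fun i => min ((i:ℝ) / N) 1 with hP
    have Pmono : Monotone P := by
      intro i j hij
      apply min_le_min _ le_rfl
      gcongr

    have Pmem : ∀ i, P i ∈ Set.Icc (0:ℝ) 1 := by
      intro i
      constructor
      · exact le_min (by positivity) zero_le_one
      · exact min_le_right _ _
    have P0 : P 0 = 0 := by simp [hP]
    have PN : P N = 1 := by
      have : ((N:ℕ):ℝ) / N = 1 := div_self (ne_of_gt hNpos)
      rw [hP]; simp only; rw [this]; simp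
    have Pstep : ∀ i, P (i + 1) - P i ≤ 1 / N := by
      intro i
      have hc : ((i + 1 : ℕ):ℝ) / N = (i:ℝ) / N + 1 / N := by push_cast; ring
      have he : P (i + 1) = min ((i:ℝ) / N + 1 / N) 1 := by rw [hP]; simp only; rw [hc]
      rw [he]
      exact min_step _ _ (by positivity)
    have chord_small : ∀ i, dist (γ (P (i+1))) (γ (P i)) < ε := by
      intro i
      apply hδ _ (Pmem (i+1)) _ (Pmem i)
      rw [Real.dist_eq, abs_of_nonneg (sub_nonneg.2 (Pmono (Nat.le_succ i)))]
      exact lt_of_le_of_lt (Pstep i) hNδ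
    have chordsum : ∑ i ∈ Finset.range N, dist (γ (P (i+1))) (γ (P i)) ≤ Vr := by
      have hsum := eVariationOn.sum_le (f := γ) (n := N) Pmono Pmem
      rw [← ENNReal.ofReal_le_iff_le_toReal hV, ENNReal.ofReal_sum_of_nonneg
        (fun i _ => dist_nonneg)]
      refine le_trans (le_of_eq ?_) hsum
      exact Finset.sum_congr rfl fun i _ => (edist_dist _ _).symm
    have hsphP : ∀ i, ‖γ (P i)‖ = 1 := fun i => hsph _ (Pmem i)
    have chain : θ ≤ ∑ i ∈ Finset.range N, angle (γ (P i)) (γ (P (i+1))) := by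
      have := chain_angle (w := fun i => γ (P i)) hsphP N
      rwa [P0, PN, h0, h1, ← hθ] at this
    have hsqrt_nonneg : 0 ≤ Real.sqrt (1 - (ε / 2) ^ 2) := Real.sqrt_nonneg _
    calc θ * Real.sqrt (1 - (ε / 2) ^ 2)
        ≤ (∑ i ∈ Finset.range N, angle (γ (P i)) (γ (P (i+1)))) * Real.sqrt (1 - (ε / 2) ^ 2) :=
          mul_le_mul_of_nonneg_right chain hsqrt_nonneg
      _ = ∑ i ∈ Finset.range N, angle (γ (P i)) (γ (P (i+1))) * Real.sqrt (1 - (ε / 2) ^ 2) :=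
          Finset.sum_mul _ _ _
      _ ≤ ∑ i ∈ Finset.range N, dist (γ (P (i+1))) (γ (P i)) := by
          apply Finset.sum_le_sum
          intro i _
          have hch : ‖γ (P i) - γ (P (i+1))‖ ≤ ε := by
            rw [← dist_eq_norm, dist_comm]
            exact le_of_lt (chord_small i)
          have := angle_le_chord_div (hsphP i) (hsphP (i+1)) hch
          rwa [← dist_eq_norm, dist_comm] at this
      _ ≤ Vr := chordsum
  -- pass to the limit ε → 0
  have hle : θ ≤ Vr := by
    have htend : Filter.Tendsto (fun n : ℕ => θ * Real.sqrt (1 - ((1 / ((n:ℝ) + 1)) / 2) ^ 2))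
        Filter.atTop (nhds θ) := by
      have h1 : Filter.Tendsto (fun n : ℕ => 1 / ((n:ℝ) + 1)) Filter.atTop (nhds 0) :=
        tendsto_one_div_add_atTop_nhds_zero_nat
      have hcontf : Continuous (fun x : ℝ => θ * Real.sqrt (1 - (x / 2) ^ 2)) := by
        fun_prop
      have := (hcontf.tendsto 0).comp h1
      simpa [Function.comp_def] using this
    exact le_of_tendsto' htend fun n => key _ (by positivity)
  calc ENNReal.ofReal θ ≤ ENNReal.ofReal Vr := ENNReal.ofReal_le_ofReal hle
    _ = eVariationOn γ (Set.Icc 0 1) := ENNReal.ofReal_toReal hV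

lemma norm_comb_sq {x y : V} (hx : ‖x‖ = 1) (hy : ‖y‖ = 1) (hxy : ⟪x, y⟫ = 0) (a b : ℝ) :
    ‖a • x + b • y‖ ^ 2 = a ^ 2 + b ^ 2 := by
  rw [norm_add_sq_real, real_inner_smul_left, real_inner_smul_right, hxy,
    norm_smul, norm_smul, hx, hy, Real.norm_eq_abs, Real.norm_eq_abs]
  simp [sq_abs]


end Aux


lemma exists_unit_orthogonal (u : EuclideanSpace ℝ (Fin 3)) (hu : ‖u‖ = 1) :
    ∃ w : EuclideanSpace ℝ (Fin 3), ‖w‖ = 1 ∧ ⟪u, w⟫ = 0 := by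
  have huu : ⟪u, u⟫ = (1:ℝ) := by
    rw [real_inner_self_eq_norm_sq, hu]; norm_num
  have hspan : (ℝ ∙ u) ≠ ⊤ := by
    intro htop
    have hune : u ≠ 0 := by intro h; rw [h] at hu; simp at hu
    have h1 : Module.finrank ℝ (ℝ ∙ u) = 1 := finrank_span_singleton hune
    rw [htop, finrank_top] at h1
    simp [finrank_euclideanSpace] at h1
  have hex : ∃ v, v ∉ (ℝ ∙ u) := by
    by_contra hcon
    push_neg at hcon
    exact hspan (Submodule.eq_top_iff'.mpr hcon)
  obtain ⟨v, hv⟩ := hex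
  set w₀ : EuclideanSpace ℝ (Fin 3) := v - ⟪u, v⟫ • u with hw₀
  have hw₀ne : w₀ ≠ 0 := by
    intro h0
    apply hv
    have : v = ⟪u, v⟫ • u := by
      have := sub_eq_zero.1 h0
      linear_combination (norm := module) this
    rw [this]
    exact Submodule.smul_mem _ _ (Submodule.mem_span_singleton_self u)
  refine ⟨‖w₀‖⁻¹ • w₀, ?_, ?_⟩
  · rw [norm_smul, norm_inv, norm_norm, inv_mul_cancel₀ (norm_ne_zero_iff.2 hw₀ne)]
  · rw [real_inner_smul_right, hw₀, inner_sub_right, real_inner_smul_right, huu]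
    ring
lemma decomp_exists (u v : EuclideanSpace ℝ (Fin 3)) (hu : ‖u‖ = 1) (hv : ‖v‖ = 1) :
    ∃ w : EuclideanSpace ℝ (Fin 3), ‖w‖ = 1 ∧ ⟪u, w⟫ = 0 ∧
      v = Real.cos (angle u v) • u + Real.sin (angle u v) • w := by
  have huu : ⟪u, u⟫ = (1:ℝ) := by rw [real_inner_self_eq_norm_sq, hu]; norm_num
  set θ := angle u v with hθ
  have hcos : Real.cos θ = ⟪u, v⟫ := cos_angle_unit hu hv
  set p : EuclideanSpace ℝ (Fin 3) := v - ⟪u, v⟫ • u with hp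
  have hnp : ‖p‖ = Real.sin θ := by
    rw [hθ, angle_comm u v, sin_angle_unit hv hu, hp, real_inner_comm v u]
  rcases eq_or_ne (Real.sin θ) 0 with hs | hs
  · obtain ⟨w, hw1, hw2⟩ := exists_unit_orthogonal u hu
    refine ⟨w, hw1, hw2, ?_⟩
    have hpz : p = 0 := by rw [← norm_eq_zero, hnp, hs]
    rw [hs, zero_smul, add_zero, hcos]
    rw [hp] at hpz
    have h2 := sub_eq_zero.1 hpz
    exact h2
  · refine ⟨(Real.sin θ)⁻¹ • p, ?_, ?_, ?_⟩
    · have hsnn : 0 ≤ Real.sin θ :=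
        Real.sin_nonneg_of_nonneg_of_le_pi (hθ ▸ angle_nonneg u v) (hθ ▸ angle_le_pi u v)
      rw [norm_smul, hnp, Real.norm_eq_abs, abs_of_nonneg (inv_nonneg.2 hsnn),
        inv_mul_cancel₀ hs]
    · rw [real_inner_smul_right, hp, inner_sub_right, real_inner_smul_right, huu, mul_one,
        sub_self, mul_zero]
    · rw [smul_smul, mul_inv_cancel₀ hs, one_smul, hcos, hp]
      abel




lemma geodesic_exists (u v : EuclideanSpace ℝ (Fin 3)) (hu : ‖u‖ = 1) (hv : ‖v‖ = 1)
    (w : EuclideanSpace ℝ (Fin 3)) (hw : ‖w‖ = 1) (hwu : ⟪u, w⟫ = 0)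
    (hvw : v = Real.cos (angle u v) • u + Real.sin (angle u v) • w) :
    ∃ γ : ℝ → EuclideanSpace ℝ (Fin 3),
      ContinuousOn γ (Set.Icc 0 1) ∧ γ 0 = u ∧ γ 1 = v ∧
      (∀ t ∈ Set.Icc (0:ℝ) 1, ‖γ t‖ = 1) ∧
      eVariationOn γ (Set.Icc 0 1) ≤ ENNReal.ofReal (angle u v) := by
  set θ := angle u v with hθ
  have hθ0 : 0 ≤ θ := angle_nonneg u v
  refine ⟨fun t => Real.cos (θ * t) • u + Real.sin (θ * t) • w, ?_, ?_, ?_, ?_, ?_⟩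
  · fun_prop
  · simp
  · simpa using hvw.symm
  · intro t _
    have h := norm_comb_sq hu hw hwu (Real.cos (θ * t)) (Real.sin (θ * t))
    rw [Real.cos_sq_add_sin_sq] at h
    nlinarith [norm_nonneg (Real.cos (θ * t) • u + Real.sin (θ * t) • w)]
  · -- Lipschitz with constant θ
    have hlip : LipschitzWith θ.toNNReal
        (fun t => Real.cos (θ * t) • u + Real.sin (θ * t) • w) := by
      apply LipschitzWith.of_dist_le_mul
      intro s t
      rw [dist_eq_norm]
      have hdiff : (Real.cos (θ * s) • u + Real.sin (θ * s) • w) -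
          (Real.cos (θ * t) • u + Real.sin (θ * t) • w) =
          (Real.cos (θ * s) - Real.cos (θ * t)) • u +
          (Real.sin (θ * s) - Real.sin (θ * t)) • w := by
        module
      rw [hdiff]
      have hsq := norm_comb_sq hu hw hwu (Real.cos (θ * s) - Real.cos (θ * t))
        (Real.sin (θ * s) - Real.sin (θ * t))
      have hId : (Real.cos (θ * s) - Real.cos (θ * t)) ^ 2 +
          (Real.sin (θ * s) - Real.sin (θ * t)) ^ 2 = 2 - 2 * Real.cos (θ * s - θ * t) := by
        rw [Real.cos_sub]
        nlinarith [Real.sin_sq_add_cos_sq (θ * s), Real.sin_sq_add_cos_sq (θ * t)]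
      have hb : 2 - 2 * Real.cos (θ * s - θ * t) ≤ (θ * s - θ * t) ^ 2 := by
        have h1 : Real.cos (θ * s - θ * t) =
            1 - 2 * Real.sin ((θ * s - θ * t) / 2) ^ 2 := by
          have h := Real.cos_two_mul ((θ * s - θ * t) / 2)
          have h2 := Real.sin_sq_add_cos_sq ((θ * s - θ * t) / 2)
          have he : 2 * ((θ * s - θ * t) / 2) = θ * s - θ * t := by ring
          rw [he] at h
          linarith
        have h2 : |Real.sin ((θ * s - θ * t) / 2)| ≤ |(θ * s - θ * t) / 2| :=
          Real.abs_sin_le_abs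
        nlinarith [sq_abs (Real.sin ((θ * s - θ * t) / 2)), sq_abs ((θ * s - θ * t) / 2),
          sq_nonneg (|Real.sin ((θ * s - θ * t) / 2)| - |(θ * s - θ * t) / 2|),
          abs_nonneg (Real.sin ((θ * s - θ * t) / 2)), abs_nonneg ((θ * s - θ * t) / 2)]
      have hnn : (θ.toNNReal : ℝ) = θ := Real.coe_toNNReal θ hθ0
      rw [hnn, dist_eq_norm, Real.norm_eq_abs]
      have habs : θ * |s - t| = |θ * s - θ * t| := by
        rw [← abs_of_nonneg hθ0, ← abs_mul, mul_sub, abs_of_nonneg hθ0]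
      rw [habs]
      nlinarith [norm_nonneg ((Real.cos (θ * s) - Real.cos (θ * t)) • u +
        (Real.sin (θ * s) - Real.sin (θ * t)) • w), abs_nonneg (θ * s - θ * t),
        sq_abs (θ * s - θ * t)]
    have hcomp := (hlip.lipschitzOnWith (s := Set.univ)).comp_eVariationOn_le
      (g := id) (s := Set.Icc (0:ℝ) 1) (Set.mapsTo_univ _ _)
    have hid : eVariationOn (id : ℝ → ℝ) (Set.Icc 0 1) ≤ ENNReal.ofReal 1 := by
      have := (monotone_id.monotoneOn (Set.Icc (0:ℝ) 1)).eVariationOn_le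
        (Set.left_mem_Icc.2 zero_le_one) (Set.right_mem_Icc.2 zero_le_one)
      rw [Set.inter_self] at this
      simpa using this
    calc eVariationOn _ (Set.Icc 0 1) ≤ θ.toNNReal * eVariationOn id (Set.Icc 0 1) := hcomp
      _ ≤ θ.toNNReal * ENNReal.ofReal 1 := by exact mul_le_mul_right hid _
      _ = ENNReal.ofReal θ := by
          rw [ENNReal.ofReal_one, mul_one, ENNReal.ofReal]

/-- The intrinsic (induced length) distance between two unit vectors `u`, `v` in the unit
sphere `S² ⊂ ℝ³` — the infimum of lengths of paths in the sphere connecting `u` to `v` —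
equals the angle between `u` and `v`. -/
theorem intrinsic_sphere_dist_eq_angle
    (u v : EuclideanSpace ℝ (Fin 3)) (hu : ‖u‖ = 1) (hv : ‖v‖ = 1) :
    sInf {L : ℝ≥0∞ | ∃ γ : ℝ → EuclideanSpace ℝ (Fin 3),
        ContinuousOn γ (Set.Icc 0 1) ∧
        γ 0 = u ∧ γ 1 = v ∧
        (∀ t ∈ Set.Icc (0:ℝ) 1, ‖γ t‖ = 1) ∧
        L = eVariationOn γ (Set.Icc 0 1)}
      = ENNReal.ofReal (InnerProductGeometry.angle u v) := by
  apply le_antisymm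
  · obtain ⟨w, hw1, hw2, hvw⟩ := decomp_exists u v hu hv
    obtain ⟨γ, hc, h0, h1, hs, hbound⟩ := geodesic_exists u v hu hv w hw1 hw2 hvw
    exact le_trans (sInf_le ⟨γ, hc, h0, h1, hs, rfl⟩) hbound
  · apply le_sInf
    rintro L ⟨γ, hc, h0, h1, hs, rfl⟩
    exact lower_bound hu hv γ hc h0 h1 hs
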